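/- Let s, φ ∈ C¹_FF([0,1]) with ‖s'‖₁ > 0 and ‖φ'‖₁ > 0, and let g₁, g₂ ∈ 𝒢 satisfy s∘g₁ = φ∘g₂. Then for all u ∈ [0,1], F_s(g₁(u)) = F_φ(g₂(u)), where F_s and F_φ are the cumulative distribution functions of the normalized densities |s'|/‖s'‖₁ and |φ'|/‖φ'‖₁ respectively. -/

import Mathlib

open Set MeasureTheory
open Filter Topology

/-- `g` is piecewise-C¹ on `[0,1]`: continuous, differentiable except at finitely many
points, with derivative continuous off that finite exceptional set. -/
def PiecewiseC1 (g : ℝ → ℝ) : Prop :=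
  ContinuousOn g (Set.Icc 0 1) ∧
  ∃ S : Finset ℝ,
    (∀ x ∈ Set.Icc (0:ℝ) 1 \ S, DifferentiableAt ℝ g x) ∧
    ContinuousOn (deriv g) (Set.Icc 0 1 \ S)

/-- `g` has finitely many flat regions: the zero set of `g'` in `[0,1]` has finitely many
connected components. -/
def FiniteFlats (g : ℝ → ℝ) : Prop :=
  {C : Set ℝ | ∃ x ∈ {y ∈ Set.Icc (0:ℝ) 1 | deriv g y = 0},
      C = connectedComponentIn {y ∈ Set.Icc (0:ℝ) 1 | deriv g y = 0} x}.Finite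

/-- The class C¹_FF([0,1]). -/
def C1FF (g : ℝ → ℝ) : Prop := PiecewiseC1 g ∧ FiniteFlats g

/-- The set 𝒢 of admissible time warps: C¹_FF, non-decreasing on `[0,1]`,
with `g 0 = 0` and `g 1 = 1`. -/
def InG (g : ℝ → ℝ) : Prop :=
  C1FF g ∧ MonotoneOn g (Set.Icc 0 1) ∧ g 0 = 0 ∧ g 1 = 1

/-- `‖f'‖₁ = ∫₀¹ |f'(x)| dx`. -/
noncomputable def normD1 (f : ℝ → ℝ) : ℝ := ∫ x in (0:ℝ)..1, |deriv f x|

/-- CDF of the normalized density `|f'| / ‖f'‖₁`. -/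
noncomputable def cdfOf (f : ℝ → ℝ) (t : ℝ) : ℝ :=
  (normD1 f)⁻¹ * ∫ x in (0:ℝ)..t, |deriv f x|


section Helpers

private lemma integrableOn_of_normD1_pos {s : ℝ → ℝ} (h : 0 < normD1 s) :
    IntegrableOn (fun y => |deriv s y|) (Icc (0:ℝ) 1) := by
  by_contra hI
  have h2 : ¬ IntervalIntegrable (fun y => |deriv s y|) volume 0 1 := fun h' =>
    hI ((intervalIntegrable_iff_integrableOn_Icc_of_le (by norm_num)).mp h')
  rw [normD1, intervalIntegral.integral_undef h2] at h
  exact lt_irrefl 0 h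

private lemma deriv_nonneg_of_monotoneOn {g : ℝ → ℝ} (hmono : MonotoneOn g (Icc 0 1))
    {x : ℝ} (hx : x ∈ Ioo (0:ℝ) 1) (hd : DifferentiableAt ℝ g x) : 0 ≤ deriv g x := by
  have hder := hd.hasDerivAt
  rw [hasDerivAt_iff_tendsto_slope] at hder
  have hT : Tendsto (slope g x) (𝓝[>] x) (𝓝 (deriv g x)) :=
    hder.mono_left (nhdsWithin_mono _ fun y hy => ne_of_gt hy)
  refine ge_of_tendsto hT ?_
  filter_upwards [Ioo_mem_nhdsGT_of_mem ⟨le_refl x, hx.2⟩] with y hy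
  rw [slope_def_field]
  exact div_nonneg (sub_nonneg.2 (hmono ⟨hx.1.le, hx.2.le⟩
    ⟨(hx.1.trans hy.1).le, hy.2.le⟩ hy.1.le)) (sub_nonneg.2 hy.1.le)

private lemma const_of_flat {g : ℝ → ℝ} (hcont : ContinuousOn g (Icc 0 1))
    {a b : ℝ} (ha : 0 ≤ a) (hab : a < b) (hb : b ≤ 1)
    (hdiff : ∀ x ∈ Ioo a b, DifferentiableAt ℝ g x)
    (hflat : ∀ x ∈ Ioo a b, deriv g x = 0) : g a = g b := by
  have key : ∀ x ∈ Ioc a b, g x = g b := by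
    intro x hx
    rcases eq_or_lt_of_le hx.2 with rfl | hxb
    · rfl
    · have hc := constant_of_has_deriv_right_zero (f := g) (a := x) (b := b)
        (hcont.mono (Icc_subset_Icc (ha.trans hx.1.le) hb))
        (fun y hy => by
          have hy' : y ∈ Ioo a b := ⟨hx.1.trans_le hy.1, hy.2⟩
          have hh := (hdiff y hy').hasDerivAt
          rw [hflat y hy'] at hh
          exact hh.hasDerivWithinAt)
      exact (hc b ⟨hxb.le, le_rfl⟩).symm
  haveI : (𝓝[Ioc a b] a).NeBot := by
    rw [← mem_closure_iff_nhdsWithin_neBot, closure_Ioc hab.ne]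
    exact ⟨le_rfl, hab.le⟩
  have h1 : Tendsto g (𝓝[Ioc a b] a) (𝓝 (g a)) :=
    (hcont a ⟨ha, hab.le.trans hb⟩).mono
      (fun y hy => ⟨ha.trans hy.1.le, hy.2.trans hb⟩) |>.tendsto
  have h2 : Tendsto g (𝓝[Ioc a b] a) (𝓝 (g b)) :=
    tendsto_const_nhds.congr' (by filter_upwards [self_mem_nhdsWithin] with y hy
      using (key y hy).symm)
  exact tendsto_nhds_unique h1 h2

private lemma image_Ioo_ae {g : ℝ → ℝ} (hcont : ContinuousOn g (Icc 0 1))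
    (hmono : MonotoneOn g (Icc 0 1)) {a b : ℝ} (ha : 0 ≤ a) (hab : a ≤ b) (hb : b ≤ 1) :
    g '' Ioo a b =ᵐ[volume] Ioo (g a) (g b) := by
  have haI : a ∈ Icc (0:ℝ) 1 := ⟨ha, hab.trans hb⟩
  have hbI : b ∈ Icc (0:ℝ) 1 := ⟨ha.trans hab, hb⟩
  have hsub : g '' Ioo a b ⊆ Icc (g a) (g b) := by
    rintro _ ⟨x, hx, rfl⟩
    have hxI : x ∈ Icc (0:ℝ) 1 := ⟨ha.trans hx.1.le, hx.2.le.trans hb⟩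
    exact ⟨hmono haI hxI hx.1.le, hmono hxI hbI hx.2.le⟩
  have hsup : Ioo (g a) (g b) ⊆ g '' Ioo a b := by
    intro y hy
    obtain ⟨x, hx, hxy⟩ := intermediate_value_Icc hab
      (hcont.mono (Icc_subset_Icc ha hb)) ⟨hy.1.le, hy.2.le⟩
    refine ⟨x, ⟨lt_of_le_of_ne hx.1 ?_, lt_of_le_of_ne hx.2 ?_⟩, hxy⟩
    · rintro rfl; exact absurd hxy.symm (ne_of_gt hy.1)
    · rintro rfl; exact absurd hxy (ne_of_gt hy.2)
  rw [MeasureTheory.ae_eq_set]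
  constructor
  · refine measure_mono_null (diff_subset_diff_left hsub) ?_
    refine measure_mono_null (fun z hz => ?_ : _ ⊆ ({g a, g b} : Set ℝ))
      (Set.Finite.measure_zero (by simp) _)
    rcases hz with ⟨⟨h1, h2⟩, h3⟩
    simp only [mem_Ioo, not_and_or, not_lt] at h3
    rcases h3 with h3 | h3
    · exact Or.inl (le_antisymm h3 h1)
    · exact Or.inr (le_antisymm h2 h3)
  · rw [diff_eq_empty.2 hsup]; exact measure_empty

set_option maxHeartbeats 1000000 in
private lemma subst_base {s g : ℝ → ℝ} {Bad : Set ℝ}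
    (hIs : IntegrableOn (fun y => |deriv s y|) (Icc (0:ℝ) 1))
    (hcont : ContinuousOn g (Icc 0 1)) (hmono : MonotoneOn g (Icc 0 1))
    (hmap : ∀ x ∈ Icc (0:ℝ) 1, g x ∈ Icc (0:ℝ) 1)
    (hdiff : ∀ x ∈ Ioo (0:ℝ) 1, x ∉ Bad → DifferentiableAt ℝ g x)
    (hinj : ∀ a b : ℝ, 0 ≤ a → a < b → b ≤ 1 → Ioo a b ∩ Bad = ∅ →
      (∃ x ∈ Ioo a b, deriv g x ≠ 0) → InjOn g (Ioo a b))
    {a b : ℝ} (ha : 0 ≤ a) (hab : a ≤ b) (hb : b ≤ 1) (hE : Ioo a b ∩ Bad = ∅) :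
    IntervalIntegrable (fun x => |deriv s (g x)| * deriv g x) volume a b ∧
    ∫ x in a..b, |deriv s (g x)| * deriv g x = ∫ y in g a..g b, |deriv s y| := by
  rcases eq_or_lt_of_le hab with rfl | hlt
  · exact ⟨IntervalIntegrable.refl, by rw [intervalIntegral.integral_same,
      intervalIntegral.integral_same]⟩
  have hIooSub : Ioo a b ⊆ Ioo (0:ℝ) 1 := fun x hx =>
    ⟨ha.trans_lt hx.1, hx.2.trans_le hb⟩
  have hdiff' : ∀ x ∈ Ioo a b, DifferentiableAt ℝ g x := fun x hx =>
    hdiff x (hIooSub hx) (fun hB => by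
      have : x ∈ Ioo a b ∩ Bad := ⟨hx, hB⟩
      rw [hE] at this; exact this)
  by_cases hflat : ∀ x ∈ Ioo a b, deriv g x = 0
  · have hgab : g a = g b := const_of_flat hcont ha hlt hb hdiff' hflat
    have hune : ∀ᵐ x : ℝ, x ∉ ({b} : Set ℝ) := measure_eq_zero_iff_ae_notMem.mp (measure_singleton b)
    have h0 : ∀ᵐ x ∂(volume : Measure ℝ), x ∈ uIoc a b →
        |deriv s (g x)| * deriv g x = 0 := by
      filter_upwards [hune] with x hxb hx
      rw [uIoc_of_le hab] at hx
      have hx' : x ∈ Ioo a b := ⟨hx.1, lt_of_le_of_ne hx.2 (by simpa using hxb)⟩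
      rw [hflat x hx', mul_zero]
    constructor
    · rw [intervalIntegrable_iff]
      refine (integrable_zero _ _ _).congr ?_
      refine ((ae_restrict_iff' measurableSet_uIoc).2 ?_)
      filter_upwards [h0] with x hx hmem
      exact (hx hmem).symm
    · rw [hgab, intervalIntegral.integral_same, intervalIntegral.integral_congr_ae h0,
        intervalIntegral.integral_zero]
  · push_neg at hflat
    have hInj : InjOn g (Ioo a b) := hinj a b ha hlt hb hE hflat
    have hders : ∀ x ∈ Ioo a b, HasDerivWithinAt g (deriv g x) (Ioo a b) x := fun x hx =>
      ((hdiff' x hx).hasDerivAt).hasDerivWithinAt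
    have CoV := integral_image_eq_integral_abs_deriv_smul measurableSet_Ioo hders hInj
      (fun y => |deriv s y|)
    have himg : g '' Ioo a b ⊆ Icc (0:ℝ) 1 := by
      rintro _ ⟨x, hx, rfl⟩
      exact hmap x ⟨ha.trans hx.1.le, hx.2.le.trans hb⟩
    have hInt1 : IntegrableOn (fun y => |deriv s y|) (g '' Ioo a b) := hIs.mono_set himg
    have hInt2 : IntegrableOn (fun x => |deriv g x| • |deriv s (g x)|) (Ioo a b) :=
      (integrableOn_image_iff_integrableOn_abs_deriv_smul measurableSet_Ioo hders hInj (fun y => |deriv s y|)).1 hInt1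
    have hEqOn : EqOn (fun x => |deriv g x| • |deriv s (g x)|)
        (fun x => |deriv s (g x)| * deriv g x) (Ioo a b) := fun x hx => by
      have h0 : 0 ≤ deriv g x := deriv_nonneg_of_monotoneOn hmono (hIooSub hx) (hdiff' x hx)
      simp [smul_eq_mul, abs_of_nonneg h0, mul_comm]
    have hInt2' : IntegrableOn (fun x => |deriv s (g x)| * deriv g x) (Ioo a b) :=
      hInt2.congr_fun hEqOn measurableSet_Ioo
    have hgle : g a ≤ g b := hmono ⟨ha, hab.trans hb⟩ ⟨ha.trans hab, hb⟩ hab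
    constructor
    · rw [intervalIntegrable_iff, uIoc_of_le hab]
      exact hInt2'.congr_set_ae Ioo_ae_eq_Ioc.symm
    · calc ∫ x in a..b, |deriv s (g x)| * deriv g x
          = ∫ x in Ioc a b, |deriv s (g x)| * deriv g x := intervalIntegral.integral_of_le hab
        _ = ∫ x in Ioo a b, |deriv s (g x)| * deriv g x :=
            (setIntegral_congr_set Ioo_ae_eq_Ioc).symm
        _ = ∫ x in Ioo a b, |deriv g x| • |deriv s (g x)| :=
            (setIntegral_congr_fun measurableSet_Ioo hEqOn).symm
        _ = ∫ y in g '' Ioo a b, |deriv s y| := CoV.symm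
        _ = ∫ y in Ioo (g a) (g b), |deriv s y| :=
            setIntegral_congr_set (image_Ioo_ae hcont hmono ha hab hb)
        _ = ∫ y in Ioc (g a) (g b), |deriv s y| := setIntegral_congr_set Ioo_ae_eq_Ioc
        _ = ∫ y in g a..g b, |deriv s y| := (intervalIntegral.integral_of_le hgle).symm

private lemma subst_all {s g : ℝ → ℝ} {Bad : Set ℝ} (hBad : Bad.Finite)
    (hIs : IntegrableOn (fun y => |deriv s y|) (Icc (0:ℝ) 1))
    (hcont : ContinuousOn g (Icc 0 1)) (hmono : MonotoneOn g (Icc 0 1))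
    (hmap : ∀ x ∈ Icc (0:ℝ) 1, g x ∈ Icc (0:ℝ) 1)
    (hdiff : ∀ x ∈ Ioo (0:ℝ) 1, x ∉ Bad → DifferentiableAt ℝ g x)
    (hinj : ∀ a b : ℝ, 0 ≤ a → a < b → b ≤ 1 → Ioo a b ∩ Bad = ∅ →
      (∃ x ∈ Ioo a b, deriv g x ≠ 0) → InjOn g (Ioo a b)) :
    ∀ a b : ℝ, 0 ≤ a → a ≤ b → b ≤ 1 →
      IntervalIntegrable (fun x => |deriv s (g x)| * deriv g x) volume a b ∧
      ∫ x in a..b, |deriv s (g x)| * deriv g x = ∫ y in g a..g b, |deriv s y| := by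
  classical
  have hsInt : ∀ c d : ℝ, 0 ≤ c → c ≤ d → d ≤ 1 →
      IntervalIntegrable (fun y => |deriv s y|) volume c d := fun c d hc hcd hd =>
    (intervalIntegrable_iff_integrableOn_Icc_of_le hcd).2
      (hIs.mono_set (Icc_subset_Icc hc hd))
  have main : ∀ n : ℕ, ∀ a b : ℝ,
      (hBad.toFinset.filter fun t => t ∈ Ioo a b).card ≤ n →
      0 ≤ a → a ≤ b → b ≤ 1 →
      IntervalIntegrable (fun x => |deriv s (g x)| * deriv g x) volume a b ∧
      ∫ x in a..b, |deriv s (g x)| * deriv g x = ∫ y in g a..g b, |deriv s y| := by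
    intro n
    induction n with
    | zero =>
      intro a b hcard ha hab hb
      refine subst_base hIs hcont hmono hmap hdiff hinj ha hab hb ?_
      ext t
      simp only [mem_inter_iff, mem_empty_iff_false, iff_false, not_and]
      intro htI htB
      have : t ∈ hBad.toFinset.filter fun t => t ∈ Ioo a b :=
        Finset.mem_filter.2 ⟨hBad.mem_toFinset.2 htB, htI⟩
      rw [Nat.le_zero, Finset.card_eq_zero] at hcard
      rw [hcard] at this
      exact absurd this (Finset.notMem_empty t)
    | succ n ih =>
      intro a b hcard ha hab hb
      by_cases hE : Ioo a b ∩ Bad = ∅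
      · exact subst_base hIs hcont hmono hmap hdiff hinj ha hab hb hE
      · obtain ⟨m, hmI, hmB⟩ := nonempty_iff_ne_empty.2 hE
        have hmem : m ∈ hBad.toFinset.filter fun t => t ∈ Ioo a b :=
          Finset.mem_filter.2 ⟨hBad.mem_toFinset.2 hmB, hmI⟩
        have hc1 : (hBad.toFinset.filter fun t => t ∈ Ioo a m).card ≤ n := by
          have hsub : (hBad.toFinset.filter fun t => t ∈ Ioo a m) ⊆
              (hBad.toFinset.filter fun t => t ∈ Ioo a b).erase m := by
            intro t ht
            rw [Finset.mem_filter] at ht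
            exact Finset.mem_erase.2 ⟨ne_of_lt ht.2.2, Finset.mem_filter.2
              ⟨ht.1, ht.2.1, ht.2.2.trans hmI.2⟩⟩
          have h1 := Finset.card_le_card hsub
          rw [Finset.card_erase_of_mem hmem] at h1
          omega
        have hc2 : (hBad.toFinset.filter fun t => t ∈ Ioo m b).card ≤ n := by
          have hsub : (hBad.toFinset.filter fun t => t ∈ Ioo m b) ⊆
              (hBad.toFinset.filter fun t => t ∈ Ioo a b).erase m := by
            intro t ht
            rw [Finset.mem_filter] at ht
            exact Finset.mem_erase.2 ⟨(ne_of_lt ht.2.1).symm, Finset.mem_filter.2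
              ⟨ht.1, hmI.1.trans ht.2.1, ht.2.2⟩⟩
          have h1 := Finset.card_le_card hsub
          rw [Finset.card_erase_of_mem hmem] at h1
          omega
        obtain ⟨i1, e1⟩ := ih a m hc1 ha hmI.1.le (hmI.2.le.trans hb)
        obtain ⟨i2, e2⟩ := ih m b hc2 (ha.trans hmI.1.le) hmI.2.le hb
        refine ⟨i1.trans i2, ?_⟩
        have haI : a ∈ Icc (0:ℝ) 1 := ⟨ha, hab.trans hb⟩
        have hmIcc : m ∈ Icc (0:ℝ) 1 := ⟨ha.trans hmI.1.le, hmI.2.le.trans hb⟩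
        have hbI : b ∈ Icc (0:ℝ) 1 := ⟨ha.trans hab, hb⟩
        have hs1 : IntervalIntegrable (fun y => |deriv s y|) volume (g a) (g m) :=
          hsInt _ _ (hmap a haI).1 (hmono haI hmIcc hmI.1.le) (hmap m hmIcc).2
        have hs2 : IntervalIntegrable (fun y => |deriv s y|) volume (g m) (g b) :=
          hsInt _ _ (hmap m hmIcc).1 (hmono hmIcc hbI hmI.2.le) (hmap b hbI).2
        rw [← intervalIntegral.integral_add_adjacent_intervals i1 i2, e1, e2,
          intervalIntegral.integral_add_adjacent_intervals hs1 hs2]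
  intro a b ha hab hb
  exact main _ a b le_rfl ha hab hb

private lemma inj_of_finite_flats {g : ℝ → ℝ} (hmono : MonotoneOn g (Icc 0 1))
    (hff : FiniteFlats g) :
    ∃ Bad : Set ℝ, Bad.Finite ∧ ∀ a b : ℝ, 0 ≤ a → a < b → b ≤ 1 → Ioo a b ∩ Bad = ∅ →
      (∃ x ∈ Ioo a b, deriv g x ≠ 0) → InjOn g (Ioo a b) := by
  classical
  set Z := {y ∈ Icc (0:ℝ) 1 | deriv g y = 0} with hZ
  set comps := {C : Set ℝ | ∃ x ∈ Z, C = connectedComponentIn Z x} with hcomps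
  refine ⟨⋃ C ∈ comps, {sInf C, sSup C},
    hff.biUnion (fun _ _ => (Set.finite_singleton _).insert _), ?_⟩
  rintro a b ha hab hb hE ⟨x₀, hx₀, hd₀⟩
  have key : ∀ x y : ℝ, x ∈ Ioo a b → y ∈ Ioo a b → x < y → g x ≠ g y := by
    intro x y hx hy hlt hgeq
    have hxI : x ∈ Icc (0:ℝ) 1 := ⟨ha.trans hx.1.le, hx.2.le.trans hb⟩
    have hyI : y ∈ Icc (0:ℝ) 1 := ⟨ha.trans hy.1.le, hy.2.le.trans hb⟩
    have hconstv : ∀ w ∈ Ioo x y, g w = g x := by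
      intro w hw
      have hwI : w ∈ Icc (0:ℝ) 1 := ⟨hxI.1.trans hw.1.le, hw.2.le.trans hyI.2⟩
      exact le_antisymm (hgeq ▸ hmono hwI hyI hw.2.le) (hmono hxI hwI hw.1.le)
    have hconst : ∀ z ∈ Ioo x y, deriv g z = 0 := by
      intro z hz
      have hev : g =ᶠ[nhds z] fun _ => g x :=
        eventually_of_mem (isOpen_Ioo.mem_nhds hz) hconstv
      rw [hev.deriv_eq, deriv_const]
    have hIooZ : Ioo x y ⊆ Z := fun w hw =>
      ⟨⟨hxI.1.trans hw.1.le, hw.2.le.trans hyI.2⟩, hconst w hw⟩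
    set z₀ := (x + y) / 2 with hz₀def
    have hz₀ : z₀ ∈ Ioo x y := ⟨by simp [hz₀def]; linarith, by simp [hz₀def]; linarith⟩
    set C := connectedComponentIn Z z₀ with hC
    have hCcomps : C ∈ comps := ⟨z₀, hIooZ hz₀, rfl⟩
    have hsubC : Ioo x y ⊆ C :=
      isPreconnected_Ioo.subset_connectedComponentIn hz₀ hIooZ
    have hCZ : C ⊆ Z := connectedComponentIn_subset _ _
    have hbb : BddBelow C := ⟨0, fun w hw => (hCZ hw).1.1⟩
    have hba : BddAbove C := ⟨1, fun w hw => (hCZ hw).1.2⟩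
    have hCne : C.Nonempty := ⟨z₀, hsubC hz₀⟩
    have hinfle : sInf C ≤ x := by
      have h1 : sInf C ≤ sInf (Ioo x y) := csInf_le_csInf hbb (nonempty_Ioo.2 hlt) hsubC
      rwa [csInf_Ioo hlt] at h1
    have hsupge : y ≤ sSup C := by
      have h1 : sSup (Ioo x y) ≤ sSup C := csSup_le_csSup hba (nonempty_Ioo.2 hlt) hsubC
      rwa [csSup_Ioo hlt] at h1
    have hinfBad : sInf C ∈ ⋃ C ∈ comps, ({sInf C, sSup C} : Set ℝ) :=
      mem_biUnion hCcomps (Or.inl rfl)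
    have hsupBad : sSup C ∈ ⋃ C ∈ comps, ({sInf C, sSup C} : Set ℝ) :=
      mem_biUnion hCcomps (Or.inr rfl)
    have hinfa : sInf C ≤ a := by
      by_contra hlt'
      push_neg at hlt'
      have : sInf C ∈ Ioo a b ∩ ⋃ C ∈ comps, ({sInf C, sSup C} : Set ℝ) :=
        ⟨⟨hlt', (hinfle.trans_lt hx.2).trans_le le_rfl⟩, hinfBad⟩
      rw [hE] at this; exact this
    have hsupb : b ≤ sSup C := by
      by_contra hlt'
      push_neg at hlt'
      have : sSup C ∈ Ioo a b ∩ ⋃ C ∈ comps, ({sInf C, sSup C} : Set ℝ) :=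
        ⟨⟨hy.1.trans_le hsupge, hlt'⟩, hsupBad⟩
      rw [hE] at this; exact this
    have hx₀C : x₀ ∈ C := by
      refine IsConnected.Ioo_csInf_csSup_subset ⟨hCne, isPreconnected_connectedComponentIn⟩
        hbb hba ?_
      exact ⟨hinfa.trans_lt hx₀.1, hx₀.2.trans_le hsupb⟩
    exact hd₀ (hCZ hx₀C).2
  intro x hx y hy hxy
  rcases lt_trichotomy x y with h | h | h
  · exact absurd hxy (key x y hx hy h)
  · exact h
  · exact absurd hxy.symm (key y x hy hx h)

private lemma comp_deriv_ae {s g : ℝ → ℝ} (S Sg : Finset ℝ)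
    (hsdiff : ∀ y ∈ Icc (0:ℝ) 1 \ S, DifferentiableAt ℝ s y)
    (hmono : MonotoneOn g (Icc 0 1))
    (hmap : ∀ x ∈ Icc (0:ℝ) 1, g x ∈ Icc (0:ℝ) 1)
    (hgdiff : ∀ x ∈ Icc (0:ℝ) 1 \ Sg, DifferentiableAt ℝ g x) :
    ∀ᵐ x : ℝ, x ∈ Ioo (0:ℝ) 1 →
      |deriv s (g x)| * deriv g x = |deriv (fun t => s (g t)) x| := by
  classical
  set Bad2 : Set ℝ := ↑Sg ∪ ⋃ c ∈ (S : Set ℝ),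
    ({sInf {t | t ∈ Ioo (0:ℝ) 1 ∧ g t = c}, sSup {t | t ∈ Ioo (0:ℝ) 1 ∧ g t = c}} : Set ℝ)
    with hBad2
  have hfin : Bad2.Finite := (Sg.finite_toSet).union
    (S.finite_toSet.biUnion fun _ _ => (Set.finite_singleton _).insert _)
  have hnull : ∀ᵐ x : ℝ, x ∉ Bad2 :=
    measure_eq_zero_iff_ae_notMem.mp (hfin.measure_zero _)
  filter_upwards [hnull] with x hxB hx
  have hxI : x ∈ Icc (0:ℝ) 1 := ⟨hx.1.le, hx.2.le⟩
  have hdg : DifferentiableAt ℝ g x :=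
    hgdiff x ⟨hxI, fun hS => hxB (Or.inl hS)⟩
  by_cases hc : g x ∈ (S : Set ℝ)
  · set A := {t | t ∈ Ioo (0:ℝ) 1 ∧ g t = g x} with hA
    have hxA : x ∈ A := ⟨hx, rfl⟩
    have hAbb : BddBelow A := ⟨0, fun t ht => ht.1.1.le⟩
    have hAba : BddAbove A := ⟨1, fun t ht => ht.1.2.le⟩
    have hp : sInf A ≤ x := csInf_le hAbb hxA
    have hq : x ≤ sSup A := le_csSup hAba hxA
    have hxp : x ≠ sInf A := fun h => hxB (Or.inr (mem_biUnion hc (mem_insert_iff.2 (Or.inl h))))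
    have hxq : x ≠ sSup A := fun h => hxB (Or.inr (mem_biUnion hc (mem_insert_iff.2 (Or.inr h))))
    have hloc : ∀ t ∈ Ioo (sInf A) (sSup A), g t = g x := by
      intro t ht
      obtain ⟨t₁, ht₁A, ht₁⟩ := exists_lt_of_csInf_lt ⟨x, hxA⟩ ht.1
      obtain ⟨t₂, ht₂A, ht₂⟩ := exists_lt_of_lt_csSup ⟨x, hxA⟩ ht.2
      have htI : t ∈ Icc (0:ℝ) 1 := ⟨ht₁A.1.1.le.trans ht₁.le, ht₂.le.trans ht₂A.1.2.le⟩
      have h1I : t₁ ∈ Icc (0:ℝ) 1 := ⟨ht₁A.1.1.le, ht₁A.1.2.le⟩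
      have h2I : t₂ ∈ Icc (0:ℝ) 1 := ⟨ht₂A.1.1.le, ht₂A.1.2.le⟩
      exact le_antisymm (ht₂A.2 ▸ hmono htI h2I ht₂.le) (ht₁A.2 ▸ hmono h1I htI ht₁.le)
    have hev : g =ᶠ[nhds x] fun _ => g x :=
      eventually_of_mem (isOpen_Ioo.mem_nhds
        ⟨lt_of_le_of_ne hp (Ne.symm hxp), lt_of_le_of_ne hq hxq⟩) hloc
    have h1 : deriv g x = 0 := by rw [hev.deriv_eq, deriv_const]
    have hev2 : (fun t => s (g t)) =ᶠ[nhds x] fun _ => s (g x) :=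
      hev.mono fun t ht => congrArg s ht
    have h2 : deriv (fun t => s (g t)) x = 0 := by rw [hev2.deriv_eq, deriv_const]
    rw [h1, h2, mul_zero, abs_zero]
  · have hds : DifferentiableAt ℝ s (g x) := hsdiff _ ⟨hmap x hxI, hc⟩
    have hcomp : deriv (fun t => s (g t)) x = deriv s (g x) * deriv g x :=
      deriv_comp x hds hdg
    rw [hcomp, abs_mul, abs_of_nonneg (deriv_nonneg_of_monotoneOn hmono hx hdg)]

end Helpers

/-- if `s ∘ g₁ = φ ∘ g₂` on `[0,1]` for `g₁, g₂ ∈ 𝒢`, then the CDFs of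
the normalized densities satisfy `F_s (g₁ u) = F_φ (g₂ u)` for all `u ∈ [0,1]`. -/
theorem cdf_match (s φ g₁ g₂ : ℝ → ℝ)
    (hs : C1FF s) (hφ : C1FF φ) (hns : 0 < normD1 s) (hnφ : 0 < normD1 φ)
    (hg₁ : InG g₁) (hg₂ : InG g₂)
    (hmatch : ∀ t ∈ Set.Icc (0:ℝ) 1, s (g₁ t) = φ (g₂ t)) :
    ∀ u ∈ Set.Icc (0:ℝ) 1, cdfOf s (g₁ u) = cdfOf φ (g₂ u) := by
  obtain ⟨⟨hscont, Ss, hsdiff, -⟩, -⟩ := hs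
  obtain ⟨⟨hφcont, Sφ, hφdiff, -⟩, -⟩ := hφ
  obtain ⟨⟨⟨hg1cont, Sg1, hg1diff, -⟩, hg1ff⟩, hg1mono, hg10, hg11⟩ := hg₁
  obtain ⟨⟨⟨hg2cont, Sg2, hg2diff, -⟩, hg2ff⟩, hg2mono, hg20, hg21⟩ := hg₂
  have hIs := integrableOn_of_normD1_pos hns
  have hIφ := integrableOn_of_normD1_pos hnφ
  have hmap1 : ∀ x ∈ Icc (0:ℝ) 1, g₁ x ∈ Icc (0:ℝ) 1 := by
    intro x hx
    constructor
    · rw [← hg10]; exact hg1mono ⟨le_rfl, zero_le_one⟩ hx hx.1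
    · rw [← hg11]; exact hg1mono hx ⟨zero_le_one, le_rfl⟩ hx.2
  have hmap2 : ∀ x ∈ Icc (0:ℝ) 1, g₂ x ∈ Icc (0:ℝ) 1 := by
    intro x hx
    constructor
    · rw [← hg20]; exact hg2mono ⟨le_rfl, zero_le_one⟩ hx hx.1
    · rw [← hg21]; exact hg2mono hx ⟨zero_le_one, le_rfl⟩ hx.2
  obtain ⟨Bad1, hBad1fin, hinj1⟩ := inj_of_finite_flats hg1mono hg1ff
  obtain ⟨Bad2, hBad2fin, hinj2⟩ := inj_of_finite_flats hg2mono hg2ff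
  have hB1fin : (Bad1 ∪ ↑Sg1).Finite := hBad1fin.union Sg1.finite_toSet
  have hB2fin : (Bad2 ∪ ↑Sg2).Finite := hBad2fin.union Sg2.finite_toSet
  have hdiff1 : ∀ x ∈ Ioo (0:ℝ) 1, x ∉ Bad1 ∪ ↑Sg1 → DifferentiableAt ℝ g₁ x := fun x hx hB =>
    hg1diff x ⟨⟨hx.1.le, hx.2.le⟩, fun h => hB (Or.inr h)⟩
  have hdiff2 : ∀ x ∈ Ioo (0:ℝ) 1, x ∉ Bad2 ∪ ↑Sg2 → DifferentiableAt ℝ g₂ x := fun x hx hB =>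
    hg2diff x ⟨⟨hx.1.le, hx.2.le⟩, fun h => hB (Or.inr h)⟩
  have hinj1' : ∀ a b : ℝ, 0 ≤ a → a < b → b ≤ 1 → Ioo a b ∩ (Bad1 ∪ ↑Sg1) = ∅ →
      (∃ x ∈ Ioo a b, deriv g₁ x ≠ 0) → InjOn g₁ (Ioo a b) := fun a b ha hab hb hE hex =>
    hinj1 a b ha hab hb (Set.eq_empty_of_subset_empty
      (fun t ht => by rw [← hE]; exact ⟨ht.1, Or.inl ht.2⟩)) hex
  have hinj2' : ∀ a b : ℝ, 0 ≤ a → a < b → b ≤ 1 → Ioo a b ∩ (Bad2 ∪ ↑Sg2) = ∅ →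
      (∃ x ∈ Ioo a b, deriv g₂ x ≠ 0) → InjOn g₂ (Ioo a b) := fun a b ha hab hb hE hex =>
    hinj2 a b ha hab hb (Set.eq_empty_of_subset_empty
      (fun t ht => by rw [← hE]; exact ⟨ht.1, Or.inl ht.2⟩)) hex
  have key1 := subst_all hB1fin hIs hg1cont hg1mono hmap1 hdiff1 hinj1'
  have key2 := subst_all hB2fin hIφ hg2cont hg2mono hmap2 hdiff2 hinj2'
  have hcomp1 := comp_deriv_ae Ss Sg1 hsdiff hg1mono hmap1 hg1diff
  have hcomp2 := comp_deriv_ae Sφ Sg2 hφdiff hg2mono hmap2 hg2diff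
  have hone : ∀ᵐ x : ℝ, x ∉ ({1} : Set ℝ) :=
    measure_eq_zero_iff_ae_notMem.mp (measure_singleton 1)
  have hbridge : ∀ x ∈ Ioo (0:ℝ) 1,
      deriv (fun t => s (g₁ t)) x = deriv (fun t => φ (g₂ t)) x := fun x hx =>
    Filter.EventuallyEq.deriv_eq (eventually_of_mem (Icc_mem_nhds hx.1 hx.2) hmatch)
  have E : ∀ u ∈ Icc (0:ℝ) 1,
      (∫ y in (0:ℝ)..g₁ u, |deriv s y|) = ∫ y in (0:ℝ)..g₂ u, |deriv φ y| := by
    intro u hu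
    obtain ⟨-, e1⟩ := key1 0 u le_rfl hu.1 hu.2
    obtain ⟨-, e2⟩ := key2 0 u le_rfl hu.1 hu.2
    rw [hg10] at e1
    rw [hg20] at e2
    rw [← e1, ← e2]
    apply intervalIntegral.integral_congr_ae
    filter_upwards [hcomp1, hcomp2, hone] with x h1 h2 h4 hx
    rw [uIoc_of_le hu.1] at hx
    have hx' : x ∈ Ioo (0:ℝ) 1 :=
      ⟨hx.1, lt_of_le_of_ne (hx.2.trans hu.2) (by simpa using h4)⟩
    rw [h1 hx', h2 hx', hbridge x hx']
  have hnorm : normD1 s = normD1 φ := by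
    have h := E 1 ⟨zero_le_one, le_rfl⟩
    rw [hg11, hg21] at h
    simpa [normD1] using h
  intro u hu
  simp only [cdfOf]
  rw [hnorm, E u hu]
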